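/- Let π = (v_0, ..., v_m) be a path in a weighted graph with nonnegative edge weights and total weight L, and let 0 < δ ≤ 1. Then the vertices of π can be partitioned into at most ⌈1/δ⌉ consecutive subpaths, each of total weight at most δ·L, such that consecutive subpaths are joined by a single edge of π. -/

import Mathlib

/-- Indices `j` of edges such that the segment of edges `[i, j]` has weight exceeding `c`. -/
def goodSet (m : ℕ) (w : ℕ → ℝ) (c : ℝ) (i : ℕ) : Set ℕ :=
  {j | i ≤ j ∧ j < m ∧ c < ∑ k ∈ Finset.Ico i (j + 1), w k}

open Classical in
/-- Greedy cut points: `cutF (t+1)` is one past the least edge index `j ≥ cutF t` such that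
the segment `[cutF t, j]` has weight exceeding `c`; or `m+1` if no such edge exists. -/
noncomputable def cutF (m : ℕ) (w : ℕ → ℝ) (c : ℝ) : ℕ → ℕ
  | 0 => 0
  | t + 1 =>
    if (goodSet m w c (cutF m w c t)).Nonempty then
      sInf (goodSet m w c (cutF m w c t)) + 1
    else m + 1

lemma cutF_step (m : ℕ) (w : ℕ → ℝ) (c : ℝ) (hc : 0 ≤ c) (t : ℕ)
    (h : cutF m w c (t + 1) ≠ m + 1) :
    cutF m w c t ≤ cutF m w c (t + 1) - 1 ∧ 1 ≤ cutF m w c (t + 1) ∧ cutF m w c (t + 1) ≤ m ∧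
    (∑ k ∈ Finset.Ico (cutF m w c t) (cutF m w c (t + 1) - 1), w k) ≤ c ∧
    c < ∑ k ∈ Finset.Ico (cutF m w c t) (cutF m w c (t + 1)), w k := by
  classical
  by_cases hne : (goodSet m w c (cutF m w c t)).Nonempty
  · have heq : cutF m w c (t + 1) = sInf (goodSet m w c (cutF m w c t)) + 1 := by
      rw [cutF, if_pos hne]
    obtain ⟨h1, h2, h3⟩ := Nat.sInf_mem hne
    rw [heq, Nat.add_sub_cancel]
    refine ⟨h1, by omega, by omega, ?_, h3⟩
    rcases eq_or_lt_of_le h1 with heq2 | hlt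
    · rw [← heq2, Finset.Ico_self, Finset.sum_empty]; exact hc
    · have hnot : ¬ (cutF m w c t ≤ sInf (goodSet m w c (cutF m w c t)) - 1 ∧
          sInf (goodSet m w c (cutF m w c t)) - 1 < m ∧
          c < ∑ k ∈ Finset.Ico (cutF m w c t)
            (sInf (goodSet m w c (cutF m w c t)) - 1 + 1), w k) :=
        fun hmem => absurd (Nat.sInf_le (m := sInf (goodSet m w c (cutF m w c t)) - 1)
          (s := goodSet m w c (cutF m w c t)) hmem) (by omega)
      have hrw : sInf (goodSet m w c (cutF m w c t)) - 1 + 1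
          = sInf (goodSet m w c (cutF m w c t)) := by omega
      rw [hrw] at hnot
      by_contra hcc
      push_neg at hcc
      exact hnot ⟨by omega, by omega, hcc⟩
  · exact absurd (by rw [cutF, if_neg hne]) h

lemma cutF_last (m : ℕ) (w : ℕ → ℝ) (c : ℝ) (hc : 0 ≤ c) (t : ℕ)
    (h : cutF m w c (t + 1) = m + 1) (h2 : cutF m w c t ≤ m) :
    (∑ k ∈ Finset.Ico (cutF m w c t) m, w k) ≤ c := by
  classical
  by_cases hne : (goodSet m w c (cutF m w c t)).Nonempty
  · exfalso
    have heq : cutF m w c (t + 1) = sInf (goodSet m w c (cutF m w c t)) + 1 := by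
      rw [cutF, if_pos hne]
    obtain ⟨h1, h2', h3⟩ := Nat.sInf_mem hne
    omega
  · by_contra hcon
    push_neg at hcon
    rcases eq_or_lt_of_le h2 with heq2 | hlt
    · rw [heq2, Finset.Ico_self, Finset.sum_empty] at hcon
      exact absurd hc (not_le.mpr hcon)
    · apply hne
      refine ⟨m - 1, by omega, by omega, ?_⟩
      have hrw : m - 1 + 1 = m := by omega
      rw [hrw]
      exact hcon

lemma cutF_prop (m : ℕ) (w : ℕ → ℝ) (c : ℝ) (t : ℕ) (h : cutF m w c t = m + 1) :
    cutF m w c (t + 1) = m + 1 := by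
  classical
  rw [cutF, if_neg]
  rintro ⟨j, hj1, hj2, -⟩
  omega

lemma cutF_bound (m : ℕ) (w : ℕ → ℝ) (c : ℝ) (hc : 0 ≤ c) :
    ∀ t, cutF m w c t = m + 1 ∨ (t ≤ cutF m w c t ∧ cutF m w c t ≤ m) := by
  intro t
  induction t with
  | zero => right; exact ⟨le_refl 0, Nat.zero_le m⟩
  | succ t ih =>
    by_cases h : cutF m w c (t + 1) = m + 1
    · left; exact h
    · right
      obtain ⟨h1, h2, h3, -, -⟩ := cutF_step m w c hc t h
      rcases ih with h4 | ⟨h4, h5⟩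
      · exact absurd (cutF_prop m w c t h4) h
      · omega

lemma cutF_exists (m : ℕ) (w : ℕ → ℝ) (c : ℝ) (hc : 0 ≤ c) :
    ∃ t, cutF m w c (t + 1) = m + 1 := by
  refine ⟨m, ?_⟩
  rcases cutF_bound m w c hc (m + 1) with h | ⟨h1, h2⟩
  · exact h
  · omega

theorem stmt_4 (m : ℕ) (w : ℕ → ℝ) (hw : ∀ j, 0 ≤ w j) (δ L : ℝ)
    (hδ0 : 0 < δ) (hδ1 : δ ≤ 1) (hL : L = ∑ j ∈ Finset.range m, w j) :
    ∃ (s : ℕ) (a b : ℕ → ℕ), 1 ≤ s ∧ s ≤ ⌈1 / δ⌉₊ ∧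
      a 0 = 0 ∧ b (s - 1) = m ∧
      (∀ t < s, a t ≤ b t) ∧
      (∀ t, t + 1 < s → a (t + 1) = b t + 1) ∧
      (∀ t < s, (∑ j ∈ Finset.Ico (a t) (b t), w j) ≤ δ * L) := by
  classical
  have hL0 : 0 ≤ L := hL ▸ Finset.sum_nonneg fun j _ => hw j
  set c : ℝ := δ * L with hcdef
  have hc : 0 ≤ c := mul_nonneg hδ0.le hL0
  obtain ⟨T, hT, hTmin⟩ : ∃ T, cutF m w c (T + 1) = m + 1 ∧
      ∀ t < T, cutF m w c (t + 1) ≠ m + 1 := by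
    refine ⟨sInf {t | cutF m w c (t + 1) = m + 1},
      Nat.sInf_mem (cutF_exists m w c hc), fun t ht => ?_⟩
    exact fun hmem => absurd (Nat.sInf_le (s := {t | cutF m w c (t + 1) = m + 1}) hmem) (not_le.mpr ht)
  have h0 : cutF m w c 0 = 0 := rfl
  have hcutTle : cutF m w c T ≤ m := by
    rcases Nat.eq_zero_or_pos T with h | h
    · rw [h, h0]; exact Nat.zero_le m
    · have h' : T - 1 + 1 = T := by omega
      have := (cutF_step m w c hc (T - 1) (hTmin (T - 1) (by omega))).2.2.1
      rwa [h'] at this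
  refine ⟨T + 1, cutF m w c, fun t => if t = T then m else cutF m w c (t + 1) - 1,
    le_add_self, ?_, h0, by simp, ?_, ?_, ?_⟩
  · -- count bound
    rcases Nat.eq_zero_or_pos T with h | h
    · rw [h]
      exact Nat.one_le_iff_ne_zero.mpr (Nat.pos_iff_ne_zero.mp
        (Nat.ceil_pos.mpr (by positivity)))
    · have hmono : ∀ t < T, cutF m w c t ≤ cutF m w c (t + 1) := by
        intro t ht
        have := cutF_step m w c hc t (hTmin t ht)
        omega
      have htele : ∀ n ≤ T, (∑ t ∈ Finset.range n,
          ∑ k ∈ Finset.Ico (cutF m w c t) (cutF m w c (t + 1)), w k)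
          = ∑ k ∈ Finset.Ico 0 (cutF m w c n), w k := by
        intro n hn
        induction n with
        | zero => simp [h0]
        | succ n ih =>
          rw [Finset.sum_range_succ, ih (by omega),
            Finset.sum_Ico_consecutive _ (Nat.zero_le _) (hmono n (by omega))]
      have hlt : (T : ℝ) * c < ∑ k ∈ Finset.Ico 0 (cutF m w c T), w k := by
        rw [← htele T le_rfl]
        calc (T : ℝ) * c = ∑ _t ∈ Finset.range T, c := by
              rw [Finset.sum_const, Finset.card_range, nsmul_eq_mul]
          _ < _ := by
              apply Finset.sum_lt_sum_of_nonempty (Finset.nonempty_range_iff.mpr (by omega))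
              intro t ht
              exact (cutF_step m w c hc t (hTmin t (Finset.mem_range.mp ht))).2.2.2.2
      have hle : (∑ k ∈ Finset.Ico 0 (cutF m w c T), w k) ≤ L := by
        rw [hL]
        apply Finset.sum_le_sum_of_subset_of_nonneg
        · intro x hx
          simp only [Finset.mem_Ico, Finset.mem_range] at *
          omega
        · exact fun j _ _ => hw j
      have hkey : (T : ℝ) * c < L := lt_of_lt_of_le hlt hle
      have hLpos : 0 < L := by
        rcases lt_or_ge 0 L with h' | h'
        · exact h'
        · exfalso
          have : (0:ℝ) ≤ (T : ℝ) * c := mul_nonneg (Nat.cast_nonneg T) hc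
          linarith
      have hTlt : (T : ℝ) < 1 / δ := by
        rw [hcdef] at hkey
        rw [lt_div_iff₀ hδ0]
        nlinarith
      have : T < ⌈1 / δ⌉₊ := Nat.lt_ceil.mpr hTlt
      omega
  · -- a t ≤ b t
    intro t ht
    dsimp only
    by_cases heq : t = T
    · rw [if_pos heq, heq]; exact hcutTle
    · rw [if_neg heq]
      exact (cutF_step m w c hc t (hTmin t (by omega))).1
  · -- a (t+1) = b t + 1
    intro t ht
    dsimp only
    rw [if_neg (by omega)]
    have := cutF_step m w c hc t (hTmin t (by omega))
    omega
  · -- weight bound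
    intro t ht
    dsimp only
    by_cases heq : t = T
    · rw [if_pos heq, heq]
      exact cutF_last m w c hc T hT hcutTle
    · rw [if_neg heq]
      exact (cutF_step m w c hc t (hTmin t (by omega))).2.2.2.1
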